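/- Let V be an n-dimensional ℂ-vector space with a decomposition V = V_1 ⊕ V_2, and let F ∈ S^d V be a homogeneous form of degree d. Then F = F_1 + F_2 with F_1 ∈ S^d V_1 and F_2 ∈ S^d V_2 if and only if every product of a linear form in V_1^* with a linear form in V_2^* lies in F^⊥ (that is, V_1^* · V_2^* ⊆ (F^⊥)_2, where V_1^* ⊆ T_1 is the annihilator of V_2 and V_2^* ⊆ T_1 is the annihilator of V_1). -/

import Mathlib

/-!
Apolarity setup.  `S = ℂ[x_1,…,x_n]` and its dual ring `T = ℂ[α_1,…,α_n]` are both
realized as `MvPolynomial (Fin n) ℂ`; the apolarity action `Θ ⌟ F` (`contract Θ F`)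
lets `α_i` act as the partial differentiation operator `∂/∂x_i`.
-/

open MvPolynomial

noncomputable section Apolarity

/-- Partial derivatives on `ℂ[x_1,…,x_n]` commute. -/
lemma pderiv_pderiv_comm (n : ℕ) (i j : Fin n) (f : MvPolynomial (Fin n) ℂ) :
    pderiv i (pderiv j f) = pderiv j (pderiv i f) := by
  induction f using MvPolynomial.induction_on with
  | C a => simp
  | add p q hp hq => simp [hp, hq]
  | mul_X p k hp =>
    rcases eq_or_ne i k with rfl | hik
    · rcases eq_or_ne j i with rfl | hjk
      · rfl
      · simp only [pderiv_mul, pderiv_X_self, pderiv_X_of_ne hjk, pderiv_X_of_ne hjk.symm,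
          map_add, map_zero, map_one, Derivation.map_one_eq_zero, mul_one, mul_zero,
          add_zero, zero_add, hp]
    · rcases eq_or_ne j k with rfl | hjk
      · simp only [pderiv_mul, pderiv_X_self, pderiv_X_of_ne hik, pderiv_X_of_ne hik.symm,
          map_add, map_zero, map_one, Derivation.map_one_eq_zero, mul_one, mul_zero,
          add_zero, zero_add, hp]
      · simp only [pderiv_mul, pderiv_X_of_ne hik.symm, pderiv_X_of_ne hjk.symm, map_add,
          map_zero, mul_zero, add_zero, zero_add, hp]

variable (n : ℕ)

/-- The endomorphism `∂/∂x_i` of `S = ℂ[x_1,…,x_n]`. -/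
def derOp (i : Fin n) : Module.End ℂ (MvPolynomial (Fin n) ℂ) :=
  (pderiv i).toLinearMap

lemma derOp_commute (i j : Fin n) : Commute (derOp n i) (derOp n j) :=
  LinearMap.ext fun f => pderiv_pderiv_comm n i j f

/-- The commuting product of the operators `(∂/∂x_i)^(m i)`. -/
def piDiffHom : (Fin n → Multiplicative ℕ) →* Module.End ℂ (MvPolynomial (Fin n) ℂ) :=
  MonoidHom.noncommPiCoprod (fun i : Fin n => powersHom _ (derOp n i))
    (fun i j _ x y => ((derOp_commute n i j).pow_pow x y))

/-- The differential operator `∏ i, (∂/∂x_i)^(m i)` attached to an exponent vector `m`. -/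
def diffMonoidHom : Multiplicative (Fin n →₀ ℕ) →* Module.End ℂ (MvPolynomial (Fin n) ℂ) :=
  (piDiffHom n).comp
    (AddMonoidHom.toMultiplicative
      (Finsupp.coeFnAddHom : (Fin n →₀ ℕ) →+ (Fin n → ℕ)))

/-- The apolarity action of the dual ring `T = ℂ[α_1,…,α_n]` on `S = ℂ[x_1,…,x_n]`, as an
algebra homomorphism to differential operators: `α_i` acts as `∂/∂x_i`. -/
def apolarAlgHom :
    MvPolynomial (Fin n) ℂ →ₐ[ℂ] Module.End ℂ (MvPolynomial (Fin n) ℂ) :=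
  AddMonoidAlgebra.lift ℂ _ (Fin n →₀ ℕ) (diffMonoidHom n)

variable {n}

/-- The apolarity action `Θ ⌟ F`: apply to `F` the differential operator obtained from `Θ`
by substituting `∂/∂x_i` for the `i`-th (dual) variable. -/
def contract (Θ F : MvPolynomial (Fin n) ℂ) : MvPolynomial (Fin n) ℂ :=
  apolarAlgHom n Θ F

lemma apolarAlgHom_X (i : Fin n) : apolarAlgHom n (X i) = derOp n i := by
  classical
  have hX : (X i : MvPolynomial (Fin n) ℂ)
      = AddMonoidAlgebra.single (Finsupp.single i 1) (1 : ℂ) := rfl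
  rw [hX]
  rw [show apolarAlgHom n (AddMonoidAlgebra.single (Finsupp.single i 1) (1:ℂ))
      = (1:ℂ) • diffMonoidHom n (Multiplicative.ofAdd (Finsupp.single i 1)) from
    AddMonoidAlgebra.lift_single _ _ _]
  rw [one_smul]
  show piDiffHom n ((AddMonoidHom.toMultiplicative
      (Finsupp.coeFnAddHom : (Fin n →₀ ℕ) →+ (Fin n → ℕ)))
      (Multiplicative.ofAdd (Finsupp.single i 1))) = derOp n i
  have harg : (AddMonoidHom.toMultiplicative
        (Finsupp.coeFnAddHom : (Fin n →₀ ℕ) →+ (Fin n → ℕ)))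
        (Multiplicative.ofAdd (Finsupp.single i 1))
      = Pi.mulSingle (M := fun _ : Fin n => Multiplicative ℕ) i (Multiplicative.ofAdd 1) := by
    funext j
    rcases eq_or_ne j i with rfl | hj
    · show Multiplicative.ofAdd ((Finsupp.single j 1 : Fin n →₀ ℕ) j)
        = Pi.mulSingle (M := fun _ : Fin n => Multiplicative ℕ) j (Multiplicative.ofAdd 1) j
      rw [Finsupp.single_eq_same, Pi.mulSingle_eq_same]
    · show Multiplicative.ofAdd ((Finsupp.single i 1 : Fin n →₀ ℕ) j)
        = Pi.mulSingle (M := fun _ : Fin n => Multiplicative ℕ) i (Multiplicative.ofAdd 1) j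
      rw [Finsupp.single_eq_of_ne hj, Pi.mulSingle_eq_of_ne hj]
      exact ofAdd_zero
  refine (congrArg (piDiffHom n) harg).trans ?_
  rw [piDiffHom]
  refine (MonoidHom.noncommPiCoprod_mulSingle (ϕ := fun i : Fin n => powersHom _ (derOp n i))
    (i := i) (y := Multiplicative.ofAdd 1)).trans ?_
  rfl

/-- Sanity check: the dual variable `α_i` acts on `F` as `∂F/∂x_i`. -/
@[simp] lemma contract_X (i : Fin n) (F : MvPolynomial (Fin n) ℂ) :
    contract (X i) F = pderiv i F := by
  rw [contract, apolarAlgHom_X]; rfl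

/-- The apolar (annihilator) ideal `F^⊥ = {Θ ∈ T : Θ ⌟ F = 0}` of a polynomial `F`. -/
def apolarIdeal (F : MvPolynomial (Fin n) ℂ) : Ideal (MvPolynomial (Fin n) ℂ) where
  carrier := {Θ | contract Θ F = 0}
  zero_mem' := by simp [contract]
  add_mem' := by
    intro a b ha hb
    simp only [Set.mem_setOf_eq, contract, map_add, LinearMap.add_apply] at *
    rw [ha, hb, add_zero]
  smul_mem' := by
    intro c x hx
    simp only [Set.mem_setOf_eq, smul_eq_mul, contract, map_mul, Module.End.mul_apply] at *
    rw [hx, map_zero]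

@[simp] lemma mem_apolarIdeal {Θ F : MvPolynomial (Fin n) ℂ} :
    Θ ∈ apolarIdeal F ↔ contract Θ F = 0 := Iff.rfl

variable (n)

/-- The irrelevant maximal ideal `m = ⟨α_1,…,α_n⟩` of `T`. -/
def irrIdeal : Ideal (MvPolynomial (Fin n) ℂ) :=
  Ideal.span (Set.range X)

variable {n}

/-- The homogeneous ideal `I` has a minimal generator of degree `k`, i.e. `(I/mI)_k ≠ 0`:
there is a homogeneous element of `I` of degree `k` not belonging to `m * I`. -/
def HasMinGenOfDegree (I : Ideal (MvPolynomial (Fin n) ℂ)) (k : ℕ) : Prop :=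
  ∃ Θ, Θ ∈ I ∧ Θ.IsHomogeneous k ∧ Θ ∉ irrIdeal n * I

/-- The homogeneous ideal `I` has at least `r` minimal generators of degree `k`, i.e.
`dim_ℂ (I/mI)_k ≥ r`: there are `r` homogeneous degree-`k` elements of `I` that are
linearly independent modulo `m * I`. -/
def MinGensAtLeast (I : Ideal (MvPolynomial (Fin n) ℂ)) (k r : ℕ) : Prop :=
  ∃ Θ : Fin r → MvPolynomial (Fin n) ℂ,
    (∀ i, Θ i ∈ I ∧ (Θ i).IsHomogeneous k) ∧
    ∀ c : Fin r → ℂ, (∑ i, c i • Θ i) ∈ irrIdeal n * I → ∀ i, c i = 0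

/-- `F` is an `s`-fold direct sum of degree `d`: `F = F_1 + ⋯ + F_s` where the `F_i` are
nonzero degree-`d` forms in independent subspaces `V_i` of the space of linear forms with
`V = V_1 ⊕ ⋯ ⊕ V_s` (i.e. in disjoint sets of variables, up to linear change of variables;
`F_i ∈ S^d V_i` is expressed as membership in the subalgebra generated by `V_i`). -/
def IsSFoldDirectSum (F : MvPolynomial (Fin n) ℂ) (d s : ℕ) : Prop :=
  ∃ (V : Fin s → Submodule ℂ (MvPolynomial (Fin n) ℂ))
    (G : Fin s → MvPolynomial (Fin n) ℂ),
    (∀ i, V i ≤ homogeneousSubmodule (Fin n) ℂ 1) ∧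
    iSupIndep V ∧
    (⨆ i, V i) = homogeneousSubmodule (Fin n) ℂ 1 ∧
    (∀ i, G i ≠ 0 ∧ (G i).IsHomogeneous d ∧ G i ∈ Algebra.adjoin ℂ (V i : Set _)) ∧
    F = ∑ i, G i

/-- `F` is a direct sum: `F = F₁ + F₂` with `F₁ ∈ S^d V₁`, `F₂ ∈ S^d V₂` nonzero and
`V = V₁ ⊕ V₂`. -/
def IsDirectSum (F : MvPolynomial (Fin n) ℂ) (d : ℕ) : Prop :=
  IsSFoldDirectSum F d 2

/-- `F` is a limit (as `t → 0`) of `s`-fold direct sums of degree `d`. -/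
def IsLimitOfSFoldDirectSums (F : MvPolynomial (Fin n) ℂ) (d s : ℕ) : Prop :=
  ∃ G : ℂ → MvPolynomial (Fin n) ℂ,
    (∀ t : ℂ, t ≠ 0 → IsSFoldDirectSum (G t) d s) ∧
    ∀ m : Fin n →₀ ℕ,
      Filter.Tendsto (fun t => MvPolynomial.coeff m (G t))
        (nhdsWithin (0 : ℂ) {(0 : ℂ)}ᶜ) (nhds (MvPolynomial.coeff m F))

/-- `F` is a limit of direct sums. -/
def IsLimitOfDirectSums (F : MvPolynomial (Fin n) ℂ) (d : ℕ) : Prop :=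
  IsLimitOfSFoldDirectSums F d 2

/-- `F` is concise: `(F^⊥)_1 = 0`, i.e. `F` cannot be written using fewer variables. -/
def Concise (F : MvPolynomial (Fin n) ℂ) : Prop :=
  ∀ Θ : MvPolynomial (Fin n) ℂ, Θ.IsHomogeneous 1 → contract Θ F = 0 → Θ = 0

end Apolarity

section DSaux

open MvPolynomial

variable {n : ℕ}

lemma contract_add_right (Θ F G : MvPolynomial (Fin n) ℂ) :
    contract Θ (F + G) = contract Θ F + contract Θ G :=
  map_add (apolarAlgHom n Θ) F G

lemma contract_sum_left {ι : Type*} (s : Finset ι) (Θ : ι → MvPolynomial (Fin n) ℂ)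
    (F : MvPolynomial (Fin n) ℂ) :
    contract (∑ i ∈ s, Θ i) F = ∑ i ∈ s, contract (Θ i) F := by
  unfold contract
  rw [map_sum]
  exact LinearMap.sum_apply _ _ _

lemma contract_smul_left (c : ℂ) (Θ F : MvPolynomial (Fin n) ℂ) :
    contract (c • Θ) F = c • contract Θ F := by
  unfold contract
  rw [map_smul]
  rfl

lemma contract_mul_left (Θ₁ Θ₂ F : MvPolynomial (Fin n) ℂ) :
    contract (Θ₁ * Θ₂) F = contract Θ₁ (contract Θ₂ F) := by
  unfold contract
  rw [map_mul]
  rfl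

lemma exists_single_of_degree_one {m : Fin n →₀ ℕ} (hm : m.degree = 1) :
    ∃ i, m = Finsupp.single i 1 := by
  classical
  have hne : m.support.Nonempty := by
    by_contra h
    rw [Finset.not_nonempty_iff_eq_empty] at h
    rw [Finsupp.degree_apply, h, Finset.sum_empty] at hm
    exact one_ne_zero hm.symm
  obtain ⟨i, hi⟩ := hne
  refine ⟨i, ?_⟩
  have hmi : 1 ≤ m i := Nat.one_le_iff_ne_zero.mpr (Finsupp.mem_support_iff.mp hi)
  ext j
  rcases eq_or_ne j i with rfl | hj
  · have hle : m j ≤ m.degree := by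
      rw [Finsupp.degree_apply]
      exact Finset.single_le_sum (fun _ _ => Nat.zero_le _) hi
    rw [Finsupp.single_eq_same]
    omega
  · rw [Finsupp.single_eq_of_ne hj]
    by_contra hj0
    have hjs : j ∈ m.support := Finsupp.mem_support_iff.mpr hj0
    have hsub : ({i, j} : Finset (Fin n)) ⊆ m.support := by
      intro t ht
      rcases Finset.mem_insert.mp ht with rfl | ht
      · exact hi
      · rwa [Finset.mem_singleton.mp ht]
    have hsum : ∑ t ∈ ({i, j} : Finset (Fin n)), m t ≤ m.degree := by
      rw [Finsupp.degree_apply]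
      exact Finset.sum_le_sum_of_subset hsub
    rw [Finset.sum_pair (Ne.symm hj)] at hsum
    omega

lemma linear_eq_sum {ℓ : MvPolynomial (Fin n) ℂ} (hℓ : ℓ.IsHomogeneous 1) :
    ℓ = ∑ i, (coeff (Finsupp.single i 1) ℓ) • X i := by
  classical
  ext m
  rw [coeff_sum]
  simp only [coeff_smul, coeff_X', smul_eq_mul]
  by_cases hdeg : m.degree = 1
  · obtain ⟨j, rfl⟩ := exists_single_of_degree_one hdeg
    have hite : ∀ i : Fin n,
        (if (Finsupp.single i 1 : Fin n →₀ ℕ) = Finsupp.single j 1 then (1:ℂ) else 0)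
          = if i = j then 1 else 0 := fun i => by
      simp [Finsupp.single_left_inj (one_ne_zero (α := ℕ))]
    simp only [hite, mul_ite, mul_one, mul_zero]
    rw [Finset.sum_ite_eq' Finset.univ j, if_pos (Finset.mem_univ j)]
  · rw [hℓ.coeff_eq_zero hdeg]
    refine (Finset.sum_eq_zero fun i _ => ?_).symm
    rw [if_neg, mul_zero]
    intro h
    rw [← h] at hdeg
    exact hdeg (by simp [Finsupp.degree_apply, Finsupp.support_single_ne_zero _ (one_ne_zero (α := ℕ))])

lemma contract_linear {ℓ : MvPolynomial (Fin n) ℂ} (hℓ : ℓ.IsHomogeneous 1)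
    (F : MvPolynomial (Fin n) ℂ) :
    contract ℓ F = ∑ i, coeff (Finsupp.single i 1) ℓ • pderiv i F := by
  conv_lhs => rw [linear_eq_sum hℓ]
  rw [contract_sum_left]
  refine Finset.sum_congr rfl fun i _ => ?_
  rw [contract_smul_left, contract_X]

lemma pderiv_linear {ℓ : MvPolynomial (Fin n) ℂ} (hℓ : ℓ.IsHomogeneous 1) (i : Fin n) :
    pderiv i ℓ = C (coeff (Finsupp.single i 1) ℓ) := by
  conv_lhs => rw [linear_eq_sum hℓ]
  rw [map_sum, Finset.sum_eq_single i]
  · rw [Derivation.map_smul, pderiv_X_self, smul_eq_C_mul, mul_one]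
  · intro t _ ht
    rw [Derivation.map_smul, pderiv_X_of_ne ht, smul_zero]
  · intro h
    exact absurd (Finset.mem_univ i) h

lemma contract_linear_C {ℓ : MvPolynomial (Fin n) ℂ} (hℓ : ℓ.IsHomogeneous 1) (a : ℂ) :
    contract ℓ (C a) = 0 := by
  rw [contract_linear hℓ]
  simp

lemma contract_linear_mul {ℓ : MvPolynomial (Fin n) ℂ} (hℓ : ℓ.IsHomogeneous 1)
    (f g : MvPolynomial (Fin n) ℂ) :
    contract ℓ (f * g) = contract ℓ f * g + f * contract ℓ g := by
  rw [contract_linear hℓ, contract_linear hℓ, contract_linear hℓ]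
  rw [Finset.sum_mul, Finset.mul_sum, ← Finset.sum_add_distrib]
  refine Finset.sum_congr rfl fun i _ => ?_
  rw [pderiv_mul, smul_add, smul_mul_assoc, mul_smul_comm]

lemma contract_eq_zero_of_adjoin {ℓ : MvPolynomial (Fin n) ℂ} (hℓ : ℓ.IsHomogeneous 1)
    {V : Submodule ℂ (MvPolynomial (Fin n) ℂ)}
    (hann : ∀ v ∈ V, contract ℓ v = 0) {G : MvPolynomial (Fin n) ℂ}
    (hG : G ∈ Algebra.adjoin ℂ (V : Set (MvPolynomial (Fin n) ℂ))) :
    contract ℓ G = 0 := by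
  induction hG using Algebra.adjoin_induction with
  | mem x hx => exact hann x hx
  | algebraMap r => exact contract_linear_C hℓ r
  | add x y hx' hy' hx hy => rw [contract_add_right, hx, hy, add_zero]
  | mul x y hx' hy' hx hy => rw [contract_linear_mul hℓ, hx, hy, zero_mul, mul_zero, add_zero]

lemma coeff_pderiv (i : Fin n) (P : MvPolynomial (Fin n) ℂ) (m : Fin n →₀ ℕ) :
    coeff m (pderiv i P) = ((m i : ℂ) + 1) * coeff (m + Finsupp.single i 1) P := by
  classical
  induction P using MvPolynomial.induction_on' with
  | add p q hp hq => rw [map_add, coeff_add, coeff_add, hp, hq, mul_add]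
  | monomial μ c =>
    rw [pderiv_monomial, coeff_monomial, coeff_monomial]
    by_cases h : μ = m + Finsupp.single i 1
    · rw [if_pos h, if_pos]
      · subst h
        rw [Finsupp.add_apply, Finsupp.single_eq_same]
        push_cast
        ring
      · subst h
        rw [add_tsub_cancel_right]
    · rw [if_neg h, mul_zero, ite_eq_right_iff]
      intro hsub
      have hμi : μ i = 0 := by
        by_contra hμi
        apply h
        ext t
        rcases eq_or_ne t i with rfl | ht
        · have := congrArg (fun f : Fin n →₀ ℕ => f t) hsub
          simp only [Finsupp.tsub_apply, Finsupp.single_eq_same, Finsupp.add_apply] at *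
          omega
        · have := congrArg (fun f : Fin n →₀ ℕ => f t) hsub
          simp only [Finsupp.tsub_apply, Finsupp.single_eq_of_ne ht,
            Finsupp.add_apply] at *
          omega
      rw [hμi]
      simp

lemma pderiv_aeval_linear (c : Fin n → MvPolynomial (Fin n) ℂ)
    (hc : ∀ t, (c t).IsHomogeneous 1) (i : Fin n) (G : MvPolynomial (Fin n) ℂ) :
    pderiv i (aeval c G) =
      aeval c (∑ t, coeff (Finsupp.single i 1) (c t) • pderiv t G) := by
  induction G using MvPolynomial.induction_on with
  | C a => simp
  | add p q hp hq =>
    simp only [map_add, smul_add, Finset.sum_add_distrib] at *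
    rw [hp, hq]
  | mul_X p k hp =>
    rw [map_mul, aeval_X, pderiv_mul, hp, pderiv_linear (hc k) i]
    have hsum : ∀ t : Fin n,
        coeff (Finsupp.single i 1) (c t) • pderiv t (p * X k)
          = coeff (Finsupp.single i 1) (c t) • (pderiv t p * X k)
            + coeff (Finsupp.single i 1) (c t) • (p * pderiv t (X k)) := by
      intro t
      rw [pderiv_mul, smul_add]
    rw [Finset.sum_congr rfl fun t _ => hsum t, Finset.sum_add_distrib, map_add]
    congr 1
    · rw [Finset.sum_congr rfl fun t _ => (smul_mul_assoc _ _ _).symm, ← Finset.sum_mul,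
        map_mul, aeval_X]
    · have : ∑ t : Fin n, coeff (Finsupp.single i 1) (c t) • (p * pderiv t (X k))
          = coeff (Finsupp.single i 1) (c k) • p := by
        rw [Finset.sum_eq_single k]
        · rw [pderiv_X_self, mul_one]
        · intro t _ ht
          rw [pderiv_X_of_ne (Ne.symm ht), mul_zero, smul_zero]
        · intro h
          exact absurd (Finset.mem_univ k) h
      rw [this, map_smul]
      rw [smul_eq_C_mul, mul_comm]

end DSaux

/-- For a decomposition `V = V₁ ⊕ V₂` of the space of linear forms and a
degree-`d` form `F`, one has `F = F₁ + F₂` with `F₁ ∈ S^d V₁`, `F₂ ∈ S^d V₂` if and only if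
every product of a linear form annihilating `V₂` with a linear form annihilating `V₁`
lies in `F^⊥` (i.e. `V₁^* · V₂^* ⊆ (F^⊥)₂`). -/
theorem direct_sum_iff_quadrics
    (n d : ℕ) (F : MvPolynomial (Fin n) ℂ) (hF : F.IsHomogeneous d)
    (V₁ V₂ : Submodule ℂ (MvPolynomial (Fin n) ℂ))
    (hV₁ : V₁ ≤ homogeneousSubmodule (Fin n) ℂ 1)
    (hV₂ : V₂ ≤ homogeneousSubmodule (Fin n) ℂ 1)
    (hdisj : V₁ ⊓ V₂ = ⊥)
    (hsup : V₁ ⊔ V₂ = homogeneousSubmodule (Fin n) ℂ 1) :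
    (∃ F₁ F₂ : MvPolynomial (Fin n) ℂ,
        F₁.IsHomogeneous d ∧ F₁ ∈ Algebra.adjoin ℂ (V₁ : Set (MvPolynomial (Fin n) ℂ)) ∧
        F₂.IsHomogeneous d ∧ F₂ ∈ Algebra.adjoin ℂ (V₂ : Set (MvPolynomial (Fin n) ℂ)) ∧
        F = F₁ + F₂) ↔
    (∀ ℓ₁ ℓ₂ : MvPolynomial (Fin n) ℂ,
        ℓ₁.IsHomogeneous 1 → (∀ v ∈ V₂, contract ℓ₁ v = 0) →
        ℓ₂.IsHomogeneous 1 → (∀ v ∈ V₁, contract ℓ₂ v = 0) →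
        ℓ₁ * ℓ₂ ∈ apolarIdeal F) := by
  classical
  constructor
  · rintro ⟨F₁, F₂, hF₁h, hF₁m, hF₂h, hF₂m, rfl⟩ ℓ₁ ℓ₂ hℓ₁ hann₁ hℓ₂ hann₂
    have h1 : contract (ℓ₁ * ℓ₂) F₁ = 0 := by
      rw [contract_mul_left, contract_eq_zero_of_adjoin hℓ₂ hann₂ hF₁m]
      exact map_zero (apolarAlgHom n ℓ₁)
    have h2 : contract (ℓ₁ * ℓ₂) F₂ = 0 := by
      rw [mul_comm, contract_mul_left, contract_eq_zero_of_adjoin hℓ₁ hann₁ hF₂m]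
      exact map_zero (apolarAlgHom n ℓ₂)
    show contract (ℓ₁ * ℓ₂) (F₁ + F₂) = 0
    rw [contract_add_right, h1, h2, add_zero]
  · intro H
    have hXW : ∀ i, (X i : MvPolynomial (Fin n) ℂ) ∈ homogeneousSubmodule (Fin n) ℂ 1 :=
      fun i => (mem_homogeneousSubmodule _ _).2 (isHomogeneous_X _ _)
    have hspanX : Submodule.span ℂ (Set.range (X : Fin n → MvPolynomial (Fin n) ℂ))
        = homogeneousSubmodule (Fin n) ℂ 1 := by
      apply le_antisymm
      · rw [Submodule.span_le]
        rintro _ ⟨i, rfl⟩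
        exact hXW i
      · intro p hp
        rw [mem_homogeneousSubmodule] at hp
        rw [linear_eq_sum hp]
        exact Submodule.sum_mem _ fun i _ =>
          Submodule.smul_mem _ _ (Submodule.subset_span ⟨i, rfl⟩)
    haveI hWfd : FiniteDimensional ℂ (homogeneousSubmodule (Fin n) ℂ 1) := by
      rw [← hspanX]
      exact FiniteDimensional.span_of_finite ℂ (Set.finite_range _)
    haveI h1fd : FiniteDimensional ℂ V₁ := Submodule.finiteDimensional_of_le hV₁
    haveI h2fd : FiniteDimensional ℂ V₂ := Submodule.finiteDimensional_of_le hV₂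
    have hXli : LinearIndependent ℂ (X : Fin n → MvPolynomial (Fin n) ℂ) := by
      rw [Fintype.linearIndependent_iff]
      intro g hg j
      have h := congrArg (coeff (Finsupp.single j 1)) hg
      rw [coeff_sum] at h
      simp only [coeff_smul, coeff_X', smul_eq_mul, coeff_zero] at h
      have hite : ∀ i : Fin n,
          (if (Finsupp.single i 1 : Fin n →₀ ℕ) = Finsupp.single j 1 then (1:ℂ) else 0)
            = if i = j then 1 else 0 := fun i => by
        simp [Finsupp.single_left_inj (one_ne_zero (α := ℕ))]
      rw [Finset.sum_congr rfl fun i _ => by rw [hite i]] at h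
      simpa [Finset.sum_ite_eq'] using h
    have hrW : Module.finrank ℂ (homogeneousSubmodule (Fin n) ℂ 1) = n := by
      rw [← hspanX, finrank_span_eq_card hXli, Fintype.card_fin]
    set k₁ := Module.finrank ℂ V₁ with hk₁def
    set k₂ := Module.finrank ℂ V₂ with hk₂def
    have hk : k₁ + k₂ = n := by
      have h := Submodule.finrank_sup_add_finrank_inf_eq V₁ V₂
      rw [hsup, hdisj, finrank_bot, hrW, add_zero] at h
      omega
    have hk₁n : k₁ ≤ n := by omega
    let bb₁ := Module.finBasis ℂ V₁
    let bb₂ := Module.finBasis ℂ V₂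
    let b : Fin n → MvPolynomial (Fin n) ℂ := fun i =>
      if h : (i : ℕ) < k₁ then (bb₁ ⟨i, h⟩ : MvPolynomial (Fin n) ℂ)
      else (bb₂ ⟨(i : ℕ) - k₁, by have := i.isLt; omega⟩ : MvPolynomial (Fin n) ℂ)
    have hbdef : ∀ i : Fin n, b i =
        if h : (i : ℕ) < k₁ then (bb₁ ⟨i, h⟩ : MvPolynomial (Fin n) ℂ)
        else (bb₂ ⟨(i : ℕ) - k₁, by have := i.isLt; omega⟩ : MvPolynomial (Fin n) ℂ) :=
      fun i => rfl
    have hb₁ : ∀ (i : Fin n) (h : (i : ℕ) < k₁), b i ∈ V₁ := by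
      intro i h
      rw [hbdef, dif_pos h]
      exact (bb₁ _).2
    have hb₂ : ∀ (i : Fin n), ¬((i : ℕ) < k₁) → b i ∈ V₂ := by
      intro i h
      rw [hbdef, dif_neg h]
      exact (bb₂ _).2
    have hbW : ∀ i, (b i).IsHomogeneous 1 := by
      intro i
      by_cases h : (i : ℕ) < k₁
      · exact (mem_homogeneousSubmodule _ _).1 (hV₁ (hb₁ i h))
      · exact (mem_homogeneousSubmodule _ _).1 (hV₂ (hb₂ i h))
    have hbval₁ : ∀ j : Fin k₁, b ⟨(j : ℕ), lt_of_lt_of_le j.2 hk₁n⟩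
        = (bb₁ j : MvPolynomial (Fin n) ℂ) := by
      intro j
      rw [hbdef, dif_pos j.2]
    have hbval₂ : ∀ j : Fin k₂, b ⟨k₁ + (j : ℕ), by have := j.isLt; omega⟩
        = (bb₂ j : MvPolynomial (Fin n) ℂ) := by
      intro j
      rw [hbdef, dif_neg (by simp)]
      congr 1
      congr 1
      apply Fin.ext
      simp
    have hspanV₁ : V₁ ≤ Submodule.span ℂ
        (Set.range fun j : Fin k₁ => (bb₁ j : MvPolynomial (Fin n) ℂ)) := by
      intro v hv
      have h2 : v ∈ Submodule.map V₁.subtype (Submodule.span ℂ (Set.range bb₁)) :=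
        ⟨⟨v, hv⟩, Module.Basis.mem_span bb₁ _, rfl⟩
      rw [Submodule.map_span] at h2
      refine Submodule.span_mono ?_ h2
      rintro _ ⟨_, ⟨j, rfl⟩, rfl⟩
      exact ⟨j, rfl⟩
    have hspanV₂ : V₂ ≤ Submodule.span ℂ
        (Set.range fun j : Fin k₂ => (bb₂ j : MvPolynomial (Fin n) ℂ)) := by
      intro v hv
      have h2 : v ∈ Submodule.map V₂.subtype (Submodule.span ℂ (Set.range bb₂)) :=
        ⟨⟨v, hv⟩, Module.Basis.mem_span bb₂ _, rfl⟩
      rw [Submodule.map_span] at h2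
      refine Submodule.span_mono ?_ h2
      rintro _ ⟨_, ⟨j, rfl⟩, rfl⟩
      exact ⟨j, rfl⟩
    have hS₁sub : (Set.range fun j : Fin k₁ => (bb₁ j : MvPolynomial (Fin n) ℂ))
        ⊆ Set.range b := by
      rintro _ ⟨j, rfl⟩
      exact ⟨⟨(j : ℕ), lt_of_lt_of_le j.2 hk₁n⟩, hbval₁ j⟩
    have hS₂sub : (Set.range fun j : Fin k₂ => (bb₂ j : MvPolynomial (Fin n) ℂ))
        ⊆ Set.range b := by
      rintro _ ⟨j, rfl⟩
      exact ⟨⟨k₁ + (j : ℕ), by have := j.isLt; omega⟩, hbval₂ j⟩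
    have hspanb : homogeneousSubmodule (Fin n) ℂ 1 ≤ Submodule.span ℂ (Set.range b) := by
      rw [← hsup]
      exact sup_le (le_trans hspanV₁ (Submodule.span_mono hS₁sub))
        (le_trans hspanV₂ (Submodule.span_mono hS₂sub))
    have hXmem : ∀ i : Fin n, ∃ g : Fin n → ℂ, ∑ j, g j • b j = X i := by
      intro i
      exact (Submodule.mem_span_range_iff_exists_fun ℂ).1 (hspanb (hXW i))
    choose g hg using hXmem
    let A : Matrix (Fin n) (Fin n) ℂ := fun j i => coeff (Finsupp.single j 1) (b i)
    let B : Matrix (Fin n) (Fin n) ℂ := fun j i => g i j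
    have hAB : A * B = 1 := by
      ext l i
      rw [Matrix.mul_apply, Matrix.one_apply]
      have h := congrArg (coeff (Finsupp.single l 1)) (hg i)
      rw [coeff_sum] at h
      simp only [coeff_smul, smul_eq_mul] at h
      have hX : coeff (Finsupp.single l 1) (X i : MvPolynomial (Fin n) ℂ)
          = if l = i then 1 else 0 := by
        rw [coeff_X']
        simp [Finsupp.single_left_inj (one_ne_zero (α := ℕ)), eq_comm]
      rw [hX] at h
      rw [← h]
      exact Finset.sum_congr rfl fun j _ => mul_comm _ _
    have hBA : B * A = 1 := mul_eq_one_comm.mp hAB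
    let c : Fin n → MvPolynomial (Fin n) ℂ := fun i => ∑ j, B j i • X j
    have hcdef : ∀ i, c i = ∑ j, B j i • X j := fun i => rfl
    have hc : ∀ i, (c i).IsHomogeneous 1 := by
      intro i
      rw [hcdef]
      refine IsHomogeneous.sum _ _ _ fun j _ => ?_
      rw [smul_eq_C_mul]
      exact isHomogeneous_C_mul_X _ _
    have hcoeffc : ∀ i t, coeff (Finsupp.single i 1) (c t) = B i t := by
      intro i t
      rw [hcdef, coeff_sum]
      simp only [coeff_smul, coeff_X', smul_eq_mul]
      have hite : ∀ j : Fin n,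
          (if (Finsupp.single j 1 : Fin n →₀ ℕ) = Finsupp.single i 1 then (1:ℂ) else 0)
            = if j = i then 1 else 0 := fun j => by
        simp [Finsupp.single_left_inj (one_ne_zero (α := ℕ))]
      rw [Finset.sum_congr rfl fun j _ => by rw [hite j]]
      simp [Finset.sum_ite_eq']
    let ℓv : Fin n → MvPolynomial (Fin n) ℂ := fun i => ∑ t, B i t • X t
    have hℓdef : ∀ i, ℓv i = ∑ t, B i t • X t := fun i => rfl
    have hℓhom : ∀ i, (ℓv i).IsHomogeneous 1 := by
      intro i
      rw [hℓdef]
      refine IsHomogeneous.sum _ _ _ fun j _ => ?_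
      rw [smul_eq_C_mul]
      exact isHomogeneous_C_mul_X _ _
    have hcontractℓ : ∀ (i : Fin n) (G : MvPolynomial (Fin n) ℂ),
        contract (ℓv i) G = ∑ t, B i t • pderiv t G := by
      intro i G
      rw [hℓdef, contract_sum_left]
      exact Finset.sum_congr rfl fun t _ => by rw [contract_smul_left, contract_X]
    have hkey : ∀ (i : Fin n) (G : MvPolynomial (Fin n) ℂ),
        pderiv i (aeval c G) = aeval c (contract (ℓv i) G) := by
      intro i G
      rw [pderiv_aeval_linear c hc i G, hcontractℓ]
      congr 1
      exact Finset.sum_congr rfl fun t _ => by rw [hcoeffc]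
    have hcontract_b : ∀ i j : Fin n, i ≠ j → contract (ℓv i) (b j) = 0 := by
      intro i j hij
      rw [hcontractℓ]
      have hterm : ∀ t, B i t • pderiv t (b j)
          = C (B i t * A t j) := by
        intro t
        rw [pderiv_linear (hbW j) t, smul_eq_C_mul, ← C_mul]
      rw [Finset.sum_congr rfl fun t _ => hterm t,
        ← map_sum (C : ℂ →+* MvPolynomial (Fin n) ℂ),
        show ∑ t, B i t * A t j = (B * A) i j from (Matrix.mul_apply).symm, hBA,
        Matrix.one_apply_ne hij, map_zero]
    have hker : ∀ (i : Fin n) (s : Set (MvPolynomial (Fin n) ℂ)),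
        (∀ x ∈ s, contract (ℓv i) x = 0) →
        ∀ v ∈ Submodule.span ℂ s, contract (ℓv i) v = 0 := by
      intro i s hs v hv
      have hle : Submodule.span ℂ s ≤ LinearMap.ker (apolarAlgHom n (ℓv i)) := by
        rw [Submodule.span_le]
        intro x hx
        exact LinearMap.mem_ker.mpr (hs x hx)
      exact hle hv
    have hkill₁ : ∀ i : Fin n, (i : ℕ) < k₁ → ∀ v ∈ V₂, contract (ℓv i) v = 0 := by
      intro i hi v hv
      refine hker i _ ?_ v (hspanV₂ hv)
      rintro _ ⟨j, rfl⟩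
      show contract (ℓv i) (bb₂ j : MvPolynomial (Fin n) ℂ) = 0
      rw [← hbval₂ j]
      refine hcontract_b i _ (Fin.ne_of_val_ne ?_)
      simp only [Fin.val_mk]
      omega
    have hkill₂ : ∀ j : Fin n, ¬((j : ℕ) < k₁) → ∀ v ∈ V₁, contract (ℓv j) v = 0 := by
      intro j hj v hv
      refine hker j _ ?_ v (hspanV₁ hv)
      rintro _ ⟨i, rfl⟩
      show contract (ℓv j) (bb₁ i : MvPolynomial (Fin n) ℂ) = 0
      rw [← hbval₁ i]
      refine hcontract_b j _ (Fin.ne_of_val_ne ?_)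
      have := i.2
      simp only [Fin.val_mk]
      omega
    set F' := aeval c F with hF'def
    have hmix : ∀ i j : Fin n, (i : ℕ) < k₁ → ¬((j : ℕ) < k₁) →
        pderiv i (pderiv j F') = 0 := by
      intro i j hi hj
      rw [hF'def, hkey j F, hkey i _, ← contract_mul_left]
      have h := H (ℓv i) (ℓv j) (hℓhom i) (hkill₁ i hi) (hℓhom j) (hkill₂ j hj)
      rw [mem_apolarIdeal] at h
      rw [h, map_zero]
    have hF'h : F'.IsHomogeneous d := by
      have h := hF.aeval c hc
      rwa [one_mul] at h
    have hpure : ∀ m ∈ F'.support, ¬(∀ t ∈ m.support, (t : ℕ) < k₁) →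
        ∀ t ∈ m.support, ¬((t : ℕ) < k₁) := by
      intro m hm hnot t ht hti
      push_neg at hnot
      obtain ⟨j, hjm, hj⟩ := hnot
      have h1 : m t ≠ 0 := Finsupp.mem_support_iff.mp ht
      have h2 : m j ≠ 0 := Finsupp.mem_support_iff.mp hjm
      have htj : t ≠ j := by
        intro e
        rw [e] at hti
        omega
      set m' := m - Finsupp.single t 1 - Finsupp.single j 1 with hm'def
      have hco := congrArg (coeff m') (hmix t j hti (by omega))
      rw [_root_.coeff_pderiv, _root_.coeff_pderiv, coeff_zero] at hco
      have hmm : m' + Finsupp.single t 1 + Finsupp.single j 1 = m := by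
        rw [hm'def]
        ext u
        simp only [Finsupp.add_apply, Finsupp.tsub_apply, Finsupp.single_apply]
        rcases eq_or_ne t u with rfl | h3
        · rw [if_pos rfl, if_neg (Ne.symm htj)]
          omega
        · rw [if_neg h3]
          rcases eq_or_ne j u with rfl | h4
          · rw [if_pos rfl]
            omega
          · rw [if_neg h4]
            omega
      rw [hmm] at hco
      exact (mul_ne_zero (Nat.cast_add_one_ne_zero _)
        (mul_ne_zero (Nat.cast_add_one_ne_zero _)
          (mem_support_iff.mp hm))) hco
    set P : (Fin n →₀ ℕ) → Prop := fun m => ∀ t ∈ m.support, (t : ℕ) < k₁ with hPdef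
    set G₁ := ∑ m ∈ F'.support.filter P, monomial m (coeff m F') with hG₁def
    set G₂ := ∑ m ∈ F'.support.filter (fun m => ¬ P m), monomial m (coeff m F') with hG₂def
    have hsplit : F' = G₁ + G₂ := by
      rw [hG₁def, hG₂def, Finset.sum_filter_add_sum_filter_not]
      exact F'.as_sum
    have hmono : ∀ m ∈ F'.support, (monomial m (coeff m F')).IsHomogeneous d := by
      intro m hm
      apply isHomogeneous_monomial
      rw [Finsupp.degree_eq_weight_one]
      exact hF'h (mem_support_iff.mp hm)
    have hmem : ∀ (m : Fin n →₀ ℕ) (cm : ℂ) (Vv : Submodule ℂ (MvPolynomial (Fin n) ℂ)),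
        (∀ t ∈ m.support, b t ∈ Vv) →
        aeval b (monomial m cm) ∈ Algebra.adjoin ℂ (Vv : Set (MvPolynomial (Fin n) ℂ)) := by
      intro m cm Vv hmV
      rw [aeval_monomial]
      refine Subalgebra.mul_mem _ (Subalgebra.algebraMap_mem _ _) ?_
      rw [Finsupp.prod]
      refine Subalgebra.prod_mem _ fun t ht => ?_
      exact Subalgebra.pow_mem _ (Algebra.subset_adjoin (hmV t ht)) _
    have hG₁h : G₁.IsHomogeneous d := by
      rw [hG₁def]
      exact IsHomogeneous.sum _ _ _ fun m hm => hmono m (Finset.filter_subset _ _ hm)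
    have hG₂h : G₂.IsHomogeneous d := by
      rw [hG₂def]
      exact IsHomogeneous.sum _ _ _ fun m hm => hmono m (Finset.filter_subset _ _ hm)
    have hid : aeval b F' = F := by
      rw [hF'def]
      have hcomp : (aeval b).comp (aeval (R := ℂ) c)
          = AlgHom.id ℂ (MvPolynomial (Fin n) ℂ) := by
        apply algHom_ext
        intro i
        simp only [AlgHom.comp_apply, aeval_X, AlgHom.id_apply]
        have hsum : (aeval (R := ℂ) b) (c i) = ∑ j, g i j • b j := by
          rw [hcdef, map_sum]
          exact Finset.sum_congr rfl fun j _ => by rw [map_smul, aeval_X]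
        rw [hsum, hg i]
      exact AlgHom.congr_fun hcomp F
    refine ⟨aeval b G₁, aeval b G₂, ?_, ?_, ?_, ?_, ?_⟩
    · have h := hG₁h.aeval b hbW
      rwa [one_mul] at h
    · rw [hG₁def, map_sum]
      refine Subalgebra.sum_mem _ fun m hm => ?_
      have hmP := (Finset.mem_filter.mp hm).2
      exact hmem m _ V₁ fun t ht => hb₁ t (hmP t ht)
    · have h := hG₂h.aeval b hbW
      rwa [one_mul] at h
    · rw [hG₂def, map_sum]
      refine Subalgebra.sum_mem _ fun m hm => ?_
      obtain ⟨hms, hmP⟩ := Finset.mem_filter.mp hm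
      exact hmem m _ V₂ fun t ht => hb₂ t (hpure m hms hmP t ht)
    · rw [← hid, hsplit, map_add]
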